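/- Let k be a positive integer and ζ a real number. Then λ̂_k(ζ) ≤ max{1/k, 1/λ_1(ζ)} (with the convention 1/∞ = 0 when λ_1(ζ) = ∞). -/

import Mathlib

/-- Distance from a real number to the nearest integer. -/
noncomputable def distNearestInt (a : ℝ) : ℝ := |a - round a|

/-- `max_{1 ≤ j ≤ k} ‖ζ^j x‖` for a positive integer `x`. -/
noncomputable def maxDist (k : ℕ) (ζ : ℝ) (x : ℕ) : ℝ :=
  ⨆ j ∈ Finset.Icc 1 k, distNearestInt (ζ ^ j * x)

/-- The approximation constant `λ_k(ζ)`, as an extended real number in `[0,∞]`. -/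
noncomputable def lambdaConst (k : ℕ) (ζ : ℝ) : EReal :=
  sSup (insert (0 : EReal) {e : EReal | ∃ η : ℝ, e = (η : EReal) ∧
    {x : ℕ | 0 < x ∧ 0 < maxDist k ζ x ∧ maxDist k ζ x ≤ (x : ℝ) ^ (-η)}.Infinite})

/-- The uniform approximation constant `λ̂_k(ζ)`, as an extended real number in `[0,∞]`. -/
noncomputable def lambdaHatConst (k : ℕ) (ζ : ℝ) : EReal :=
  sSup (insert (0 : EReal) {e : EReal | ∃ η : ℝ, e = (η : EReal) ∧
    ∃ X₀ : ℝ, ∀ X : ℝ, X₀ ≤ X → ∃ x : ℕ, 1 ≤ x ∧ (x : ℝ) ≤ X ∧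
      0 < maxDist k ζ x ∧ maxDist k ζ x ≤ X ^ (-η)})

/-- The dual approximation constant `w_k(ζ)`, as an extended real number in `[0,∞]`. -/
noncomputable def wConst (k : ℕ) (ζ : ℝ) : EReal :=
  sSup (insert (0 : EReal) {e : EReal | ∃ ν : ℝ, e = (ν : EReal) ∧
    ∀ X₀ : ℝ, ∃ X : ℝ, X₀ ≤ X ∧ ∃ p : Fin (k + 1) → ℤ,
      (∀ j, |(p j : ℝ)| ≤ X) ∧
      0 < |∑ j : Fin (k + 1), ζ ^ (j : ℕ) * (p j : ℝ)| ∧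
      |∑ j : Fin (k + 1), ζ ^ (j : ℕ) * (p j : ℝ)| ≤ X ^ (-ν)})

/-- The uniform dual approximation constant `ŵ_k(ζ)`, as an extended real number in `[0,∞]`. -/
noncomputable def wHatConst (k : ℕ) (ζ : ℝ) : EReal :=
  sSup (insert (0 : EReal) {e : EReal | ∃ ν : ℝ, e = (ν : EReal) ∧
    ∃ X₀ : ℝ, ∀ X : ℝ, X₀ ≤ X → ∃ p : Fin (k + 1) → ℤ,
      (∀ j, |(p j : ℝ)| ≤ X) ∧
      0 < |∑ j : Fin (k + 1), ζ ^ (j : ℕ) * (p j : ℝ)| ∧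
      |∑ j : Fin (k + 1), ζ ^ (j : ℕ) * (p j : ℝ)| ≤ X ^ (-ν)})

lemma dn_nonneg (a : ℝ) : 0 ≤ distNearestInt a := abs_nonneg _

lemma dn_le (a : ℝ) (m : ℤ) : distNearestInt a ≤ |a - m| := round_le a m

lemma dn_le_half (a : ℝ) : distNearestInt a ≤ 1/2 := abs_sub_round a

lemma dn_triangle (u v : ℝ) : distNearestInt v ≤ distNearestInt u + |v - u| := by
  calc distNearestInt v ≤ |v - round u| := dn_le v (round u)
    _ ≤ |v - u| + |u - round u| := by
        have := abs_sub_le v u (round u); linarith [abs_sub_le v u ((round u : ℤ) : ℝ)]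
    _ = distNearestInt u + |v - u| := by rw [distNearestInt]; ring

lemma dn_div_lt (A : ℤ) (Q : ℕ) (hQ : 0 < Q) (h : distNearestInt ((A : ℝ)/(Q : ℝ)) < 1/(Q:ℝ)) :
    (Q : ℤ) ∣ A := by
  have hQR : (0:ℝ) < (Q:ℝ) := by exact_mod_cast hQ
  set n := round ((A : ℝ)/(Q : ℝ)) with hn
  have e : (A:ℝ)/(Q:ℝ) - n = ((A - n * Q : ℤ) : ℝ)/(Q:ℝ) := by
    push_cast; field_simp; try ring
  have h1 : |((A - n * Q : ℤ) : ℝ)| < 1 := by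
    rw [distNearestInt, ← hn, e, abs_div, abs_of_pos hQR, div_lt_div_iff₀ hQR hQR] at h
    nlinarith
  have h2 : |(A - n * Q : ℤ)| < 1 := by exact_mod_cast h1
  have h3 : A - n * Q = 0 := Int.abs_lt_one_iff.mp h2
  exact ⟨n, by linarith [h3]⟩

lemma dn_div_pos (A : ℤ) (Q : ℕ) (hQ : 0 < Q) (h : 0 < distNearestInt ((A : ℝ)/(Q : ℝ))) :
    1/(Q:ℝ) ≤ distNearestInt ((A : ℝ)/(Q : ℝ)) := by
  by_contra hc
  push_neg at hc
  obtain ⟨n, hn⟩ := dn_div_lt A Q hQ hc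
  have hQR : (0:ℝ) < (Q:ℝ) := by exact_mod_cast hQ
  have : (A:ℝ)/(Q:ℝ) = ((n : ℤ) : ℝ) := by
    subst hn; push_cast; field_simp
  rw [distNearestInt, this] at h
  simp at h

lemma term_le_maxDist {k j : ℕ} (ζ : ℝ) (x : ℕ) (hj : j ∈ Finset.Icc 1 k) :
    distNearestInt (ζ ^ j * x) ≤ maxDist k ζ x := by
  have hbdd : BddAbove (Set.range fun j => ⨆ _ : j ∈ Finset.Icc 1 k, distNearestInt (ζ ^ j * x)) := by
    refine ⟨1/2, ?_⟩
    rintro r ⟨i, rfl⟩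
    dsimp only
    by_cases hi : i ∈ Finset.Icc 1 k
    · haveI : Nonempty (i ∈ Finset.Icc 1 k) := ⟨hi⟩
      rw [ciSup_const]; exact dn_le_half _
    · haveI : IsEmpty (i ∈ Finset.Icc 1 k) := ⟨hi⟩
      rw [Real.iSup_of_isEmpty]; norm_num
  have h1 : (⨆ _ : j ∈ Finset.Icc 1 k, distNearestInt (ζ ^ j * x)) ≤ maxDist k ζ x :=
    le_ciSup hbdd j
  haveI : Nonempty (j ∈ Finset.Icc 1 k) := ⟨hj⟩
  rwa [ciSup_const] at h1

lemma maxDist_le {k : ℕ} (ζ : ℝ) (x : ℕ) {c : ℝ} (h0 : 0 ≤ c)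
    (h : ∀ j ∈ Finset.Icc 1 k, distNearestInt (ζ ^ j * x) ≤ c) : maxDist k ζ x ≤ c := by
  refine ciSup_le fun j => ?_
  by_cases hj : j ∈ Finset.Icc 1 k
  · haveI : Nonempty (j ∈ Finset.Icc 1 k) := ⟨hj⟩
    rw [ciSup_const]; exact h j hj
  · haveI : IsEmpty (j ∈ Finset.Icc 1 k) := ⟨hj⟩
    rw [Real.iSup_of_isEmpty]; exact h0

lemma maxDist_one (ζ : ℝ) (x : ℕ) : maxDist 1 ζ x = distNearestInt (ζ * x) := by
  refine le_antisymm ?_ ?_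
  · refine maxDist_le ζ x (dn_nonneg _) fun j hj => ?_
    simp only [Finset.mem_Icc] at hj
    have : j = 1 := le_antisymm hj.2 hj.1
    subst this; rw [pow_one]
  · have := term_le_maxDist (k := 1) (j := 1) ζ x (by simp)
    rwa [pow_one] at this

lemma maxDist_pos_exists {k : ℕ} (ζ : ℝ) (x : ℕ) (h : 0 < maxDist k ζ x) :
    ∃ j ∈ Finset.Icc 1 k, 0 < distNearestInt (ζ ^ j * x) := by
  by_contra hc
  push_neg at hc
  have : maxDist k ζ x ≤ 0 := maxDist_le ζ x le_rfl fun j hj => hc j hj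
  linarith

lemma pow_diff_bound (u v M : ℝ) (hM : 1 ≤ M) (hu : |u| ≤ M) (hv : |v| ≤ M) (j : ℕ) :
    |u ^ j - v ^ j| ≤ j * M ^ j * |u - v| := by
  induction j with
  | zero => simp
  | succ j ih =>
    have hMp : (0:ℝ) < M := lt_of_lt_of_le zero_lt_one hM
    have e : u ^ (j+1) - v ^ (j+1) = u * (u ^ j - v ^ j) + v ^ j * (u - v) := by ring
    have hvj : |v ^ j| ≤ M ^ j := by
      rw [abs_pow]; exact pow_le_pow_left₀ (abs_nonneg _) hv j
    have hMj : M ^ j ≤ M ^ (j+1) := pow_le_pow_right₀ hM (Nat.le_succ j)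
    calc |u ^ (j+1) - v ^ (j+1)| ≤ |u| * |u ^ j - v ^ j| + |v ^ j| * |u - v| := by
          rw [e]; refine (abs_add_le _ _).trans ?_; rw [abs_mul, abs_mul]
      _ ≤ M * (j * M ^ j * |u - v|) + M ^ j * |u - v| := by
          have h1 : |u| * |u ^ j - v ^ j| ≤ M * (j * M ^ j * |u - v|) := by
            apply mul_le_mul hu ih (abs_nonneg _) (le_of_lt hMp)
          have h2 : |v ^ j| * |u - v| ≤ M ^ j * |u - v| :=
            mul_le_mul_of_nonneg_right hvj (abs_nonneg _)
          linarith
      _ ≤ (↑(j+1)) * M ^ (j+1) * |u - v| := by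
          have hh : M * ((j:ℝ) * M ^ j * |u-v|) = (j:ℝ) * M ^ (j+1) * |u-v| := by ring
          push_cast
          linarith [hh, mul_le_mul_of_nonneg_right hMj (abs_nonneg (u - v))]

set_option maxHeartbeats 1000000 in
open Filter in
lemma core_claim (k : ℕ) (hk : 0 < k) (ζ η ν : ℝ) (hη : 1/(k:ℝ) < η) (X₀ : ℝ)
    (hU : ∀ X : ℝ, X₀ ≤ X → ∃ x : ℕ, 1 ≤ x ∧ (x : ℝ) ≤ X ∧
      0 < maxDist k ζ x ∧ maxDist k ζ x ≤ X ^ (-η))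
    (hS : {y : ℕ | 0 < y ∧ 0 < maxDist 1 ζ y ∧ maxDist 1 ζ y ≤ (y:ℝ) ^ (-ν)}.Infinite) :
    ν ≤ η⁻¹ := by
  by_contra hcon
  push_neg at hcon
  have hkR : (0:ℝ) < k := by exact_mod_cast hk
  have hη0 : 0 < η := lt_trans (by positivity) hη
  have hηk : η⁻¹ < (k:ℝ) := by
    rw [inv_lt_comm₀ hη0 hkR]; simpa [one_div] using hη
  have hinv0 : 0 < η⁻¹ := by positivity
  have hν0 : 0 < ν := lt_trans hinv0 hcon
  set θ := (η⁻¹ + min ν (k:ℝ))/2 with hθdef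
  have hmin : η⁻¹ < min ν (k:ℝ) := lt_min hcon hηk
  have hθ1 : η⁻¹ < θ := by rw [hθdef]; linarith
  have hθν : θ < ν := by have := min_le_left ν (k:ℝ); rw [hθdef]; linarith
  have hθk : θ < (k:ℝ) := by have := min_le_right ν (k:ℝ); rw [hθdef]; linarith
  have hθ0 : 0 < θ := lt_trans hinv0 hθ1
  have hθη : 1 < θ * η := by
    have := mul_lt_mul_of_pos_right hθ1 hη0
    rwa [inv_mul_cancel₀ (ne_of_gt hη0)] at this
  set M := |ζ| + 1 with hMdef
  have hM : 1 ≤ M := by have := abs_nonneg ζ; rw [hMdef]; linarith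
  set C := (k:ℝ) * M ^ k with hCdef
  have hC0 : 0 < C := by positivity
  -- eventually conditions
  have hev : ∀ᶠ t : ℝ in atTop, X₀ ≤ t ^ θ ∧ t ^ (1 - θ*η) < 1/2 ∧
      C * t ^ (θ - ν) < 1/2 ∧ (2:ℝ) ≤ t := by
    have e1 : Tendsto (fun t:ℝ => t ^ θ) atTop atTop := tendsto_rpow_atTop hθ0
    have e2 : Tendsto (fun t:ℝ => t ^ (1 - θ*η)) atTop (nhds 0) := by
      have := tendsto_rpow_neg_atTop (y := θ*η - 1) (by linarith)
      simpa [neg_sub] using this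
    have e3 : Tendsto (fun t:ℝ => C * t ^ (θ - ν)) atTop (nhds 0) := by
      have := (tendsto_rpow_neg_atTop (y := ν - θ) (by linarith)).const_mul C
      simpa [neg_sub] using this
    filter_upwards [e1.eventually_ge_atTop X₀,
      e2.eventually_lt_const (by norm_num : (0:ℝ) < 1/2),
      e3.eventually_lt_const (by norm_num : (0:ℝ) < 1/2),
      eventually_ge_atTop (2:ℝ)] with t h1 h2 h3 h4
    exact ⟨h1, h2, h3, h4⟩
  obtain ⟨B, hB⟩ := eventually_atTop.mp hev
  -- the rational approximations
  set qq : ℕ → ℚ := fun y => ((round (ζ * y) : ℤ) : ℚ) / ((y : ℤ) : ℚ) with hqq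
  have hq_cast : ∀ y : ℕ, ((qq y : ℚ) : ℝ) = (round (ζ * y) : ℝ) / (y : ℝ) := by
    intro y; simp only [hqq]; push_cast; ring
  have hq_den_le : ∀ y : ℕ, 0 < y → (qq y).den ≤ y := by
    intro y hy
    have h1 : (((qq y).den : ℤ)) ∣ (y : ℤ) := by
      simp only [hqq, ← Rat.divInt_eq_div]
      exact Rat.den_dvd _ _
    exact_mod_cast Int.le_of_dvd (by exact_mod_cast hy) h1
  have hq_close : ∀ y : ℕ, y ∈ {y : ℕ | 0 < y ∧ 0 < maxDist 1 ζ y ∧ maxDist 1 ζ y ≤ (y:ℝ) ^ (-ν)} →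
      |ζ - ((qq y : ℚ) : ℝ)| ≤ (y:ℝ) ^ (-(1+ν)) ∧ ζ ≠ ((qq y : ℚ) : ℝ) := by
    rintro y ⟨hy0, hyp, hyν⟩
    have hyR : (0:ℝ) < y := by exact_mod_cast hy0
    have hmd : maxDist 1 ζ y = |ζ * y - round (ζ * y)| := by
      rw [maxDist_one]; rfl
    have e1 : ζ - ((qq y : ℚ) : ℝ) = (ζ * y - round (ζ * y)) / y := by
      rw [hq_cast y]; field_simp
    constructor
    · rw [e1, abs_div, abs_of_pos hyR, div_le_iff₀ hyR]
      have e2 : (y:ℝ) ^ (-(1+ν)) * (y:ℝ) = (y:ℝ) ^ (-ν) := by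
        rw [show (-(1+ν)) = -ν + (-1) by ring, Real.rpow_add hyR, Real.rpow_neg_one]
        field_simp
      rw [e2]
      rw [hmd] at hyν; exact hyν
    · intro hζ
      rw [← sub_eq_zero] at hζ
      rw [e1, div_eq_zero_iff] at hζ
      rcases hζ with hζ | hζ
      · rw [hmd, hζ] at hyp; simp at hyp
      · exact absurd hζ (ne_of_gt hyR)
  -- denominators are unbounded on S
  set S := {y : ℕ | 0 < y ∧ 0 < maxDist 1 ζ y ∧ maxDist 1 ζ y ≤ (y:ℝ) ^ (-ν)} with hSdef
  have hfin : ∀ B₁ : ℕ, {y : ℕ | y ∈ S ∧ (qq y).den ≤ B₁}.Finite := by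
    intro B₁
    set N₁ : ℤ := ⌈(|ζ| + 1) * B₁⌉ with hN₁
    set F : Set ℚ := (fun r : ℚ => ((r.num, r.den) : ℤ × ℕ)) ⁻¹'
      (Set.Icc (-N₁) N₁ ×ˢ Set.Icc 0 B₁) with hF
    have hFfin : F.Finite := by
      refine Set.Finite.preimage ?_ (((Set.finite_Icc _ _).prod (Set.finite_Icc _ _)))
      intro r _ s _ hrs
      simp only [Prod.mk.injEq] at hrs
      exact Rat.ext hrs.1 hrs.2
    have hfib : ∀ r : ℚ, {y : ℕ | y ∈ S ∧ qq y = r}.Finite := by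
      intro r
      rcases Set.eq_empty_or_nonempty {y : ℕ | y ∈ S ∧ qq y = r} with he | ⟨y₀, hy₀⟩
      · rw [he]; exact Set.finite_empty
      · have hc0 : 0 < |ζ - (r:ℝ)| := by
          rw [← hy₀.2]
          exact abs_pos.mpr (sub_ne_zero.mpr ((hq_close y₀ hy₀.1).2))
        refine Set.Finite.subset (Set.finite_Icc 0 ⌈|ζ - (r:ℝ)|⁻¹⌉₊) ?_
        rintro y ⟨hyS, hyr⟩
        have hy0 : 0 < y := hyS.1
        have hy1 : (1:ℝ) ≤ y := by exact_mod_cast hy0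
        have h1 : |ζ - (r:ℝ)| ≤ (y:ℝ) ^ (-(1+ν)) := by
          rw [← hyr]; exact (hq_close y hyS).1
        have h3 : (y:ℝ) ^ (-(1+ν)) = ((y:ℝ) ^ ((1+ν):ℝ))⁻¹ := by
          rw [← Real.rpow_neg (by linarith : (0:ℝ) ≤ (y:ℝ))]
        have hyp0 : (0:ℝ) < (y:ℝ) ^ ((1+ν):ℝ) := Real.rpow_pos_of_pos (by linarith) _
        have h4 : (y:ℝ) ≤ (y:ℝ) ^ ((1+ν):ℝ) := by
          nth_rewrite 1 [← Real.rpow_one (y:ℝ)]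
          exact Real.rpow_le_rpow_of_exponent_le hy1 (by linarith)
        have h5 : (y:ℝ) ^ ((1+ν):ℝ) ≤ |ζ - (r:ℝ)|⁻¹ := by
          rw [h3] at h1
          exact (le_inv_comm₀ hc0 hyp0).mp h1
        simp only [Set.mem_Icc]
        refine ⟨Nat.zero_le y, ?_⟩
        have h6 : (y:ℝ) ≤ ((⌈|ζ - (r:ℝ)|⁻¹⌉₊ : ℕ) : ℝ) := by
          calc (y:ℝ) ≤ |ζ - (r:ℝ)|⁻¹ := by linarith
            _ ≤ _ := Nat.le_ceil _
        exact_mod_cast h6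
    refine Set.Finite.subset (hFfin.biUnion (fun r _ => hfib r)) ?_
    rintro y ⟨hyS, hyden⟩
    refine Set.mem_biUnion ?_ ⟨hyS, rfl⟩
    have hy0 : 0 < y := hyS.1
    have hy1 : (1:ℝ) ≤ y := by exact_mod_cast hy0
    have hclose := (hq_close y hyS).1
    have hle1 : (y:ℝ) ^ (-(1+ν)) ≤ 1 :=
      Real.rpow_le_one_of_one_le_of_nonpos hy1 (by linarith)
    have habs : |((qq y : ℚ) : ℝ)| ≤ |ζ| + 1 := by
      have h0 := abs_sub_abs_le_abs_sub ((qq y : ℚ) : ℝ) ζ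
      have h2 : |((qq y : ℚ) : ℝ) - ζ| ≤ 1 := by
        rw [abs_sub_comm]; linarith
      linarith
    have hnum : |(qq y).num| ≤ N₁ := by
      have h1 : |((qq y).num : ℝ)| = |((qq y : ℚ) : ℝ)| * (qq y).den := by
        rw [Rat.cast_def, abs_div]
        have hd : |((qq y).den : ℝ)| = ((qq y).den : ℝ) :=
          abs_of_pos (by exact_mod_cast (qq y).pos)
        rw [hd]
        field_simp
      have h2 : |((qq y).num : ℝ)| ≤ (|ζ| + 1) * B₁ := by
        rw [h1]
        have hd : ((qq y).den : ℝ) ≤ (B₁ : ℝ) := by exact_mod_cast hyden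
        have hd0 : (0:ℝ) ≤ ((qq y).den : ℝ) := by positivity
        have habs' : 0 ≤ |((qq y : ℚ) : ℝ)| := abs_nonneg _
        have hz : (0:ℝ) ≤ |ζ| + 1 := by positivity
        calc |((qq y : ℚ) : ℝ)| * ((qq y).den : ℝ) ≤ (|ζ| + 1) * ((qq y).den : ℝ) :=
              mul_le_mul_of_nonneg_right habs hd0
          _ ≤ (|ζ| + 1) * (B₁:ℝ) := mul_le_mul_of_nonneg_left hd hz
      have h3 : |((qq y).num : ℝ)| ≤ (N₁ : ℝ) := h2.trans (Int.le_ceil _)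
      exact_mod_cast h3
    simp only [hF, Set.mem_preimage, Set.mem_prod, Set.mem_Icc]
    exact ⟨⟨neg_le_of_abs_le hnum, le_of_abs_le hnum⟩, Nat.zero_le _, hyden⟩
  -- pick y with large denominator
  set Bnat : ℕ := max 2 (⌈B⌉₊ + 1) with hBnat
  obtain ⟨y, hyS, hyT⟩ : ∃ y, y ∈ S ∧ ¬ (qq y).den ≤ Bnat := by
    obtain ⟨y, hy⟩ := (hS.diff (hfin Bnat)).nonempty
    exact ⟨y, hy.1, fun h => hy.2 ⟨hy.1, h⟩⟩
  push_neg at hyT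
  set b : ℕ := (qq y).den with hbdef
  set a : ℤ := (qq y).num with hadef
  have hb2 : 2 ≤ b := le_trans (le_max_left _ _) (le_of_lt hyT)
  have hbB : B ≤ (b:ℝ) := by
    have h1 : ⌈B⌉₊ + 1 ≤ b := le_trans (le_max_right _ _) (le_of_lt hyT)
    have h2 : B ≤ (⌈B⌉₊ : ℝ) := Nat.le_ceil B
    have h3 : ((⌈B⌉₊ + 1 : ℕ) : ℝ) ≤ (b : ℝ) := by exact_mod_cast h1
    push_cast at h3
    linarith
  have hb0 : (0:ℝ) < b := by positivity
  have hb1 : (1:ℝ) < b := by exact_mod_cast lt_of_lt_of_le one_lt_two hb2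
  obtain ⟨hc1, hc2, hc3, _⟩ := hB (b:ℝ) hbB
  have hy0 : 0 < y := hyS.1
  have hby : b ≤ y := hq_den_le y hy0
  have hqab : ((qq y : ℚ) : ℝ) = (a:ℝ)/(b:ℝ) := by
    rw [Rat.cast_def]
  have hδb : |ζ - (a:ℝ)/(b:ℝ)| ≤ (b:ℝ) ^ (-(1+ν)) := by
    rw [← hqab]
    refine ((hq_close y hyS).1).trans ?_
    exact Real.rpow_le_rpow_of_nonpos hb0 (by exact_mod_cast hby) (by linarith)
  have hδ1 : |ζ - (a:ℝ)/(b:ℝ)| ≤ 1 :=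
    hδb.trans (Real.rpow_le_one_of_one_le_of_nonpos (by linarith) (by linarith))
  have habM : |(a:ℝ)/(b:ℝ)| ≤ M := by
    have h0 := abs_sub_abs_le_abs_sub ((a:ℝ)/(b:ℝ)) ζ
    rw [abs_sub_comm] at h0
    rw [hMdef]; linarith
  have hζM : |ζ| ≤ M := by rw [hMdef]; linarith [abs_nonneg ζ]
  -- the uniform approximation at X = b^θ
  set X : ℝ := (b:ℝ) ^ θ with hXdef
  obtain ⟨x, hx1, hx2, _, hx4⟩ := hU X hc1
  have hx0 : (0:ℝ) ≤ (x:ℝ) := by positivity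
  have hXη : X ^ (-η) = (b:ℝ) ^ (θ * (-η)) := by
    rw [hXdef, ← Real.rpow_mul (le_of_lt hb0)]
  have hbinv : (b:ℝ) ^ (-1:ℝ) = ((b:ℝ))⁻¹ := Real.rpow_neg_one (b:ℝ)
  -- key induction
  have key : ∀ j, j ≤ k → b ^ j ∣ x := by
    intro j
    induction j with
    | zero => intro _; simpa using Nat.one_dvd x
    | succ j ih =>
      intro hjk
      obtain ⟨m, hm⟩ := ih (Nat.le_of_succ_le hjk)
      set A : ℤ := a ^ (j+1) * (m:ℤ) with hAdef
      have hxm : (x:ℝ) = (b:ℝ)^j * (m:ℝ) := by exact_mod_cast congrArg (Nat.cast : ℕ → ℝ) hm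
      have e_rat : (A:ℝ)/(b:ℝ) = ((a:ℝ)/(b:ℝ))^(j+1) * (x:ℝ) := by
        rw [hxm, hAdef]
        have hbne : (b:ℝ) ≠ 0 := ne_of_gt hb0
        push_cast
        field_simp
        ring_nf
        simp only [inv_pow]
        field_simp
      have hb_pos_nat : 0 < b := lt_of_lt_of_le zero_lt_two hb2
      have bound1 : distNearestInt (ζ^(j+1) * x) ≤ (b:ℝ) ^ (θ * (-η)) := by
        rw [← hXη]
        refine le_trans (term_le_maxDist ζ x ?_) hx4
        simp only [Finset.mem_Icc]
        exact ⟨Nat.succ_le_succ (Nat.zero_le j), hjk⟩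
      set D := |ζ - (a:ℝ)/(b:ℝ)| with hDdef
      have hD0 : 0 ≤ D := abs_nonneg _
      have bound2 : |(A:ℝ)/(b:ℝ) - ζ^(j+1) * x| ≤ C * (b:ℝ)^(θ - (1+ν)) := by
        rw [e_rat, ← sub_mul, abs_mul]
        have h1 : |((a:ℝ)/(b:ℝ))^(j+1) - ζ^(j+1)| ≤ (((j+1:ℕ)):ℝ) * M^(j+1) * D := by
          rw [abs_sub_comm, hDdef]
          exact pow_diff_bound ζ ((a:ℝ)/(b:ℝ)) M hM hζM habM (j+1)
        have h2 : (((j+1:ℕ)):ℝ) * M^(j+1) ≤ C := by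
          rw [hCdef]
          have hj1 : (((j+1:ℕ)):ℝ) ≤ (k:ℝ) := by exact_mod_cast hjk
          have hM1 : M^(j+1) ≤ M^k := pow_le_pow_right₀ hM hjk
          have hMp : (0:ℝ) ≤ M^(j+1) := by positivity
          calc (((j+1:ℕ)):ℝ) * M^(j+1) ≤ (k:ℝ) * M^(j+1) := mul_le_mul_of_nonneg_right hj1 hMp
            _ ≤ (k:ℝ) * M^k := mul_le_mul_of_nonneg_left hM1 (le_of_lt hkR)
        have h3 : D * (x:ℝ) ≤ (b:ℝ)^(-(1+ν)) * (b:ℝ)^θ := by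
          refine mul_le_mul hδb ?_ hx0 (by positivity)
          rw [← hXdef]; exact hx2
        have h4 : (b:ℝ)^(-(1+ν)) * (b:ℝ)^θ = (b:ℝ)^(θ - (1+ν)) := by
          rw [← Real.rpow_add hb0]; ring_nf
        have hxabs : |(x:ℝ)| = (x:ℝ) := abs_of_nonneg hx0
        calc |((a:ℝ)/(b:ℝ))^(j+1) - ζ^(j+1)| * |(x:ℝ)|
            = |((a:ℝ)/(b:ℝ))^(j+1) - ζ^(j+1)| * (x:ℝ) := by rw [hxabs]
          _ ≤ ((((j+1:ℕ)):ℝ) * M^(j+1) * D) * (x:ℝ) := mul_le_mul_of_nonneg_right h1 hx0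
          _ = ((((j+1:ℕ)):ℝ) * M^(j+1)) * (D * (x:ℝ)) := by ring
          _ ≤ C * ((b:ℝ)^(-(1+ν)) * (b:ℝ)^θ) :=
              mul_le_mul h2 h3 (mul_nonneg hD0 hx0) (le_of_lt hC0)
          _ = C * (b:ℝ)^(θ - (1+ν)) := by rw [h4]
      have main : distNearestInt ((A:ℝ)/(b:ℝ)) < 1/(b:ℝ) := by
        have htri := dn_triangle (ζ^(j+1) * x) ((A:ℝ)/(b:ℝ))
        have i1 : (b:ℝ) ^ (θ * (-η)) < 1/(2*(b:ℝ)) := by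
          have e : (b:ℝ) ^ (θ * (-η)) = (b:ℝ)^(1-θ*η) * ((b:ℝ))⁻¹ := by
            rw [← hbinv, ← Real.rpow_add hb0]
            congr 1; ring
          rw [e]
          have h2b : (0:ℝ) < (b:ℝ)⁻¹ := by positivity
          calc (b:ℝ)^(1-θ*η) * ((b:ℝ))⁻¹ < (1/2) * ((b:ℝ))⁻¹ :=
                mul_lt_mul_of_pos_right hc2 h2b
            _ = 1/(2*(b:ℝ)) := by field_simp
        have i2 : C * (b:ℝ)^(θ - (1+ν)) < 1/(2*(b:ℝ)) := by
          have eexp : (b:ℝ)^(θ-(1+ν)) = (b:ℝ)^(θ-ν) * (b:ℝ)^(-1:ℝ) := by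
            rw [← Real.rpow_add hb0]; congr 1; ring
          have e : C * (b:ℝ)^(θ - (1+ν)) = (C * (b:ℝ)^(θ-ν)) * ((b:ℝ))⁻¹ := by
            rw [eexp, hbinv]; ring
          rw [e]
          have h2b : (0:ℝ) < (b:ℝ)⁻¹ := by positivity
          calc (C * (b:ℝ)^(θ-ν)) * ((b:ℝ))⁻¹ < (1/2) * ((b:ℝ))⁻¹ :=
                mul_lt_mul_of_pos_right hc3 h2b
            _ = 1/(2*(b:ℝ)) := by field_simp
        have hsum : 1/(2*(b:ℝ)) + 1/(2*(b:ℝ)) = 1/(b:ℝ) := by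
          rw [div_add_div _ _ (by positivity : (2*(b:ℝ)) ≠ 0) (by positivity : (2*(b:ℝ)) ≠ 0),
            div_eq_div_iff (by positivity) (by positivity : ((b:ℝ)) ≠ 0)]
          ring
        calc distNearestInt ((A:ℝ)/(b:ℝ))
            ≤ distNearestInt (ζ^(j+1) * x) + |(A:ℝ)/(b:ℝ) - ζ^(j+1) * x| := htri
          _ ≤ (b:ℝ) ^ (θ * (-η)) + C * (b:ℝ)^(θ - (1+ν)) := add_le_add bound1 bound2
          _ < 1/(2*(b:ℝ)) + 1/(2*(b:ℝ)) := add_lt_add i1 i2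
          _ = 1/(b:ℝ) := hsum
      have hdvdA : (b:ℤ) ∣ A := dn_div_lt A b hb_pos_nat main
      have hcop : IsCoprime ((b:ℕ):ℤ) (a^(j+1)) := by
        rw [Int.isCoprime_iff_gcd_eq_one]
        have e : Int.gcd ((b:ℕ):ℤ) (a^(j+1)) = Nat.gcd b (a.natAbs^(j+1)) := by
          unfold Int.gcd
          rw [Int.natAbs_natCast, Int.natAbs_pow]
        rw [e]
        have hred := (qq y).reduced
        rw [← hadef, ← hbdef] at hred
        exact Nat.Coprime.pow_right _ hred.symm
      have hbm : (b:ℤ) ∣ (m:ℤ) := hcop.dvd_of_dvd_mul_left (by rwa [hAdef] at hdvdA)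
      have hbm' : b ∣ m := by exact_mod_cast hbm
      obtain ⟨m', hm'⟩ := hbm'
      exact ⟨m', by rw [hm, hm']; ring⟩
  -- contradiction
  have hdvd : b ^ k ∣ x := key k le_rfl
  have hxk : (b:ℝ) ^ (k:ℕ) ≤ (x:ℝ) := by
    exact_mod_cast Nat.le_of_dvd (lt_of_lt_of_le zero_lt_one hx1) hdvd
  have hlt : X < (b:ℝ) ^ (k:ℝ) := Real.rpow_lt_rpow_of_exponent_lt hb1 hθk
  rw [Real.rpow_natCast] at hlt
  linarith [hx2]

lemma dn_pos_irrational {ζ : ℝ} (hirr : Irrational ζ) {x : ℕ} (hx : 0 < x) :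
    0 < distNearestInt (ζ * x) := by
  rcases lt_or_eq_of_le (dn_nonneg (ζ * x)) with h | h
  · exact h
  · exfalso
    have h1 : ζ * x = round (ζ * x) := by
      have := abs_eq_zero.mp h.symm
      linarith
    have hxR : (0:ℝ) < x := by exact_mod_cast hx
    refine hirr ⟨(round (ζ * x) : ℚ) / (x : ℚ), ?_⟩
    push_cast
    field_simp
    linarith
  
open Filter in
lemma irrational_infinite (k : ℕ) (hk : 0 < k) (ζ η : ℝ) (hirr : Irrational ζ) (hη0 : 0 < η)
    (X₀ : ℝ)
    (hU : ∀ X : ℝ, X₀ ≤ X → ∃ x : ℕ, 1 ≤ x ∧ (x : ℝ) ≤ X ∧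
      0 < maxDist k ζ x ∧ maxDist k ζ x ≤ X ^ (-η)) :
    {x : ℕ | 0 < x ∧ 0 < maxDist 1 ζ x ∧ maxDist 1 ζ x ≤ (x:ℝ) ^ (-η)}.Infinite := by
  by_contra hfin
  rw [Set.not_infinite] at hfin
  obtain ⟨N, hN⟩ := hfin.bddAbove
  have hne : (Finset.Icc 1 (N+1)).Nonempty := ⟨1, by simp⟩
  set ε := (Finset.Icc 1 (N+1)).inf' hne (fun z => distNearestInt (ζ * z)) with hε
  have hε0 : 0 < ε := by
    rw [hε, Finset.lt_inf'_iff]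
    intro z hz
    simp only [Finset.mem_Icc] at hz
    exact dn_pos_irrational hirr (lt_of_lt_of_le one_pos hz.1)
  obtain ⟨X, hX1, hX2⟩ : ∃ X : ℝ, (X₀ ≤ X ∧ (1:ℝ) ≤ X) ∧ X ^ (-η) < ε := by
    have h1 := (tendsto_rpow_neg_atTop hη0).eventually_lt_const hε0
    have h2 := eventually_ge_atTop X₀
    have h3 := eventually_ge_atTop (1:ℝ)
    exact ((h2.and h3).and h1).exists
  obtain ⟨x, hx1, hx2, hx3, hx4⟩ := hU X hX1.1
  have hxpos : 0 < x := hx1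
  have hζpos : 0 < distNearestInt (ζ * x) := dn_pos_irrational hirr hxpos
  have hζle : distNearestInt (ζ * x) ≤ X ^ (-η) := by
    have h1 : distNearestInt (ζ ^ 1 * x) ≤ maxDist k ζ x :=
      term_le_maxDist ζ x (by simp [Finset.mem_Icc]; omega)
    rw [pow_one] at h1
    exact h1.trans hx4
  have hxX : X ^ (-η) ≤ (x:ℝ) ^ (-η) := by
    refine Real.rpow_le_rpow_of_nonpos ?_ hx2 (by linarith)
    exact_mod_cast hxpos
  have hmem : x ∈ {x : ℕ | 0 < x ∧ 0 < maxDist 1 ζ x ∧ maxDist 1 ζ x ≤ (x:ℝ) ^ (-η)} := by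
    refine ⟨hxpos, ?_, ?_⟩
    · rw [maxDist_one]; exact hζpos
    · rw [maxDist_one]; exact hζle.trans hxX
  have hxN : x ≤ N := hN hmem
  have hεle : ε ≤ distNearestInt (ζ * x) := by
    rw [hε]
    exact Finset.inf'_le _ (by simp [Finset.mem_Icc]; omega)
  linarith [hζle.trans_lt hX2]

open Filter in
lemma rational_case (k : ℕ) (hk : 0 < k) (ζ : ℝ) (q : ℚ) (hq : (q:ℝ) = ζ) (η : ℝ)
    (hη0 : 0 < η) (X₀ : ℝ)
    (hU : ∀ X : ℝ, X₀ ≤ X → ∃ x : ℕ, 1 ≤ x ∧ (x : ℝ) ≤ X ∧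
      0 < maxDist k ζ x ∧ maxDist k ζ x ≤ X ^ (-η)) : False := by
  set c : ℤ := q.num with hc
  set d : ℕ := q.den with hd
  have hd0 : 0 < d := q.pos
  have hdk0 : 0 < ((d:ℝ))^k := by positivity
  have hζeq : ζ = (c:ℝ)/(d:ℝ) := by rw [← hq, Rat.cast_def]
  obtain ⟨X, hX1, hX2⟩ : ∃ X : ℝ, X₀ ≤ X ∧ X ^ (-η) < 1/((d:ℝ))^k := by
    have h1 := (tendsto_rpow_neg_atTop hη0).eventually_lt_const (by positivity : 0 < 1/((d:ℝ))^k)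
    exact ((eventually_ge_atTop X₀).and h1).exists
  obtain ⟨x, hx1, hx2, hx3, hx4⟩ := hU X hX1
  obtain ⟨j, hj, hjpos⟩ := maxDist_pos_exists ζ x hx3
  simp only [Finset.mem_Icc] at hj
  set A : ℤ := c^j * x * (d:ℤ)^(k-j) with hA
  have hdj : ((d:ℝ))^(k-j) * ((d:ℝ))^j = ((d:ℝ))^k := by
    rw [← pow_add, Nat.sub_add_cancel hj.2]
  have e : ζ^j * (x:ℝ) = (A:ℝ)/(((d^k : ℕ)):ℝ) := by
    rw [hζeq, hA]
    push_cast
    rw [div_pow, ← hdj]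
    field_simp
  rw [e] at hjpos
  have hge := dn_div_pos A (d^k) (by positivity) hjpos
  have hle : distNearestInt ((A:ℝ)/(((d^k : ℕ)):ℝ)) ≤ X ^ (-η) := by
    rw [← e]
    exact (term_le_maxDist ζ x (by simp [Finset.mem_Icc]; omega)).trans hx4
  have hcast : (((d^k : ℕ)):ℝ) = ((d:ℝ))^k := by push_cast; ring
  rw [hcast] at hge hle
  linarith


theorem stmt7 (k : ℕ) (hk : 0 < k) (ζ : ℝ) :
    lambdaHatConst k ζ ≤ max (((k : ℝ) : EReal))⁻¹ (lambdaConst 1 ζ)⁻¹ := by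
  have hkR : (0:ℝ) < k := by exact_mod_cast hk
  refine sSup_le ?_
  intro e he
  rcases Set.mem_insert_iff.mp he with rfl | ⟨η, rfl, X₀, hU⟩
  · refine le_max_of_le_left ?_
    rw [← EReal.coe_inv]
    exact_mod_cast EReal.coe_nonneg.mpr (by positivity)
  · by_cases hcase : η ≤ 1/(k:ℝ)
    · refine le_max_of_le_left ?_
      rw [← EReal.coe_inv]
      exact EReal.coe_le_coe_iff.mpr (by rwa [← one_div])
    · push_neg at hcase
      refine le_max_of_le_right ?_
      have hη0 : 0 < η := lt_trans (by positivity) hcase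
      have hub : lambdaConst 1 ζ ≤ ((η⁻¹ : ℝ) : EReal) := by
        refine sSup_le ?_
        intro e' he'
        rcases Set.mem_insert_iff.mp he' with rfl | ⟨ν, rfl, hinf⟩
        · exact EReal.coe_nonneg.mpr (by positivity)
        · exact EReal.coe_le_coe_iff.mpr (core_claim k hk ζ η ν hcase X₀ hU hinf)
      by_cases hirr : Irrational ζ
      · have hlb : ((η:ℝ):EReal) ≤ lambdaConst 1 ζ :=
          le_sSup (Set.mem_insert_of_mem _
            ⟨η, rfl, irrational_infinite k hk ζ η hirr hη0 X₀ hU⟩)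
        set L := lambdaConst 1 ζ with hL
        have hLbot : L ≠ ⊥ := fun h => EReal.coe_ne_bot η (le_bot_iff.mp (h ▸ hlb))
        have hLtop : L ≠ ⊤ := fun h => EReal.coe_ne_top η⁻¹ (top_le_iff.mp (h ▸ hub))
        have hLr : L = ((L.toReal : ℝ) : EReal) := (EReal.coe_toReal hLtop hLbot).symm
        set r : ℝ := L.toReal with hr
        rw [hLr] at hlb hub ⊢
        rw [← EReal.coe_inv]
        have h1 : η ≤ r := EReal.coe_le_coe_iff.mp hlb
        have h2 : r ≤ η⁻¹ := EReal.coe_le_coe_iff.mp hub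
        have hr0 : 0 < r := lt_of_lt_of_le hη0 h1
        exact EReal.coe_le_coe_iff.mpr ((le_inv_comm₀ hη0 hr0).mpr h2)
      · exfalso
        rw [Irrational] at hirr
        obtain ⟨q, hq⟩ := not_not.mp hirr
        exact rational_case k hk ζ q hq η hη0 X₀ hU
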